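/- The graph energy of the splitting graph S'(G) equals √5 times the energy of G: E(S'(G)) = √5·E(G). -/

import Mathlib

set_option maxRecDepth 10000
set_option maxHeartbeats 1000000

open Polynomial Matrix Finset

section Aux

variable {m R : Type*} [Fintype m] [DecidableEq m] [CommRing R]

lemma aux_charpoly_conj (P Q M : Matrix m m R) (h1 : P * Q = 1) :
    (P * M * Q).charpoly = M.charpoly := by
  have hPQ : P.map (C : R →+* R[X]) * Q.map (C : R →+* R[X]) = 1 := by
    have := congrArg (fun N : Matrix m m R => N.map (C : R →+* R[X])) h1
    simpa [Matrix.map_mul] using this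
  have hm : charmatrix (P * M * Q)
      = P.map (C : R →+* R[X]) * charmatrix M * Q.map (C : R →+* R[X]) := by
    unfold charmatrix
    simp only [RingHom.mapMatrix_apply, Matrix.map_mul]
    rw [mul_sub, sub_mul]
    congr 1
    rw [scalar_apply, ← Matrix.smul_one_eq_diagonal, mul_smul_comm, smul_mul_assoc, mul_one, hPQ]
  unfold Matrix.charpoly
  rw [hm, det_mul, det_mul]
  have hdet : (P.map (C : R →+* R[X])).det * (Q.map (C : R →+* R[X])).det = 1 := by
    rw [← det_mul, hPQ, det_one]
  linear_combination M.charmatrix.det * hdet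

lemma aux_charpoly_diagonal (d : m → R) :
    (Matrix.diagonal d).charpoly = ∏ i, (X - C (d i)) := by
  have h : charmatrix (Matrix.diagonal d) = Matrix.diagonal fun i => X - C (d i) := by
    ext i j
    by_cases h : i = j
    · subst h; simp [charmatrix_apply_eq]
    · simp [charmatrix_apply_ne _ _ _ h, Matrix.diagonal_apply_ne _ h]
  rw [Matrix.charpoly, h, det_diagonal]

lemma aux_charpoly_hermitian (M : Matrix m m ℝ) (hM : M.IsHermitian) :
    M.charpoly = ∏ i, (X - C (hM.eigenvalues i)) := by
  have hU : (hM.eigenvectorUnitary : Matrix m m ℝ) * star (hM.eigenvectorUnitary : Matrix m m ℝ) = 1 :=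
    (Matrix.mem_unitaryGroup_iff).mp (hM.eigenvectorUnitary).2
  conv_lhs => rw [hM.spectral_theorem, Unitary.conjStarAlgAut_apply]
  rw [aux_charpoly_conj _ _ _ hU, RCLike.ofReal_real_eq_id, Function.id_comp,
    aux_charpoly_diagonal]

lemma aux_charpoly_blockDiagonal {o : Type*} [Fintype o] [DecidableEq o]
    (M : o → Matrix m m R) :
    (Matrix.blockDiagonal M).charpoly = ∏ k, (M k).charpoly := by
  have h : charmatrix (Matrix.blockDiagonal M)
      = Matrix.blockDiagonal fun k => charmatrix (M k) := by
    ext ⟨i, k⟩ ⟨j, k'⟩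
    by_cases hk : k = k'
    · subst hk
      by_cases hij : i = j
      · subst hij; simp [charmatrix_apply_eq, Matrix.blockDiagonal_apply_eq]
      · have : ((i, k) : m × o) ≠ (j, k) := by simp [hij]
        simp [charmatrix_apply_ne _ _ _ this, charmatrix_apply_ne _ _ _ hij,
          Matrix.blockDiagonal_apply_eq]
    · have : ((i, k) : m × o) ≠ (j, k') := by simp [hk]
      simp [charmatrix_apply_ne _ _ _ this, Matrix.blockDiagonal_apply_ne _ _ _ hk]
  rw [Matrix.charpoly, h, det_blockDiagonal]
  rfl

lemma aux_charpoly_two (a : ℝ) :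
    (!![a, a; a, 0] : Matrix (Fin 2) (Fin 2) ℝ).charpoly
      = (X - C ((1 + Real.sqrt 5) / 2 * a)) * (X - C ((1 - Real.sqrt 5) / 2 * a)) := by
  have h5 : Real.sqrt 5 * Real.sqrt 5 = 5 := Real.mul_self_sqrt (by norm_num)
  have hsum : (1 + Real.sqrt 5) / 2 * a + (1 - Real.sqrt 5) / 2 * a = a := by ring
  have hprod : ((1 + Real.sqrt 5) / 2 * a) * ((1 - Real.sqrt 5) / 2 * a) = -(a * a) := by
    field_simp; nlinarith [h5]
  have lhs : (!![a, a; a, 0] : Matrix (Fin 2) (Fin 2) ℝ).charpoly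
      = X * X - C a * X - C a * C a := by
    rw [Matrix.charpoly, Matrix.det_fin_two]
    simp [charmatrix_apply_eq, charmatrix_apply_ne]
    ring
  rw [lhs]
  have : (X - C ((1 + Real.sqrt 5) / 2 * a)) * (X - C ((1 - Real.sqrt 5) / 2 * a))
      = X * X - (C ((1 + Real.sqrt 5) / 2 * a) + C ((1 - Real.sqrt 5) / 2 * a)) * X
        + C ((1 + Real.sqrt 5) / 2 * a) * C ((1 - Real.sqrt 5) / 2 * a) := by ring
  rw [this, ← C_add, hsum]
  simp only [← C_mul]
  rw [hprod, map_neg]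
  ring

end Aux

theorem stmt_17 (n : ℕ)
    (A : Matrix (Fin n) (Fin n) ℝ) (hA : A.IsHermitian)
    (B : Matrix (Fin n ⊕ Fin n) (Fin n ⊕ Fin n) ℝ)
    (hBdef : B = Matrix.fromBlocks A A A 0)
    (hB : B.IsHermitian) :
    ∑ p, |hB.eigenvalues p| = Real.sqrt 5 * ∑ i, |hA.eigenvalues i| := by
  classical
  set μ := hA.eigenvalues with hμ
  set ν := hB.eigenvalues with hν
  set φ : ℝ := (1 + Real.sqrt 5) / 2 with hφ
  set ψ : ℝ := (1 - Real.sqrt 5) / 2 with hψ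
  set U : Matrix (Fin n) (Fin n) ℝ := (hA.eigenvectorUnitary : Matrix (Fin n) (Fin n) ℝ) with hUdef
  have hU : U * star U = 1 := (Matrix.mem_unitaryGroup_iff).mp (hA.eigenvectorUnitary).2
  have hAspec : A = U * Matrix.diagonal μ * star U := by
    conv_lhs => rw [hA.spectral_theorem, Unitary.conjStarAlgAut_apply]
    rw [RCLike.ofReal_real_eq_id, Function.id_comp]
  -- conjugate B to the diagonal-block form
  set D : Matrix (Fin n) (Fin n) ℝ := Matrix.diagonal μ with hD
  have hBconj : B = (Matrix.fromBlocks U 0 0 U) * (Matrix.fromBlocks D D D 0)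
      * (Matrix.fromBlocks (star U) 0 0 (star U)) := by
    rw [hBdef, Matrix.fromBlocks_multiply, Matrix.fromBlocks_multiply]
    simp [← hAspec, Matrix.mul_assoc]
  have hPQ : (Matrix.fromBlocks U 0 0 U) * (Matrix.fromBlocks (star U) 0 0 (star U))
      = (1 : Matrix (Fin n ⊕ Fin n) (Fin n ⊕ Fin n) ℝ) := by
    rw [Matrix.fromBlocks_multiply]
    simp [hU, Matrix.fromBlocks_one]
  have hcB1 : B.charpoly = (Matrix.fromBlocks D D D 0).charpoly := by
    rw [hBconj]; exact aux_charpoly_conj _ _ _ hPQ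
  -- reindex the block form to a block diagonal matrix
  let e : (Fin n ⊕ Fin n) ≃ (Fin 2 × Fin n) :=
    { toFun := Sum.elim (fun i => (0, i)) (fun i => (1, i))
      invFun := fun p => if p.1 = 0 then Sum.inl p.2 else Sum.inr p.2
      left_inv := by rintro (i | i) <;> simp
      right_inv := by rintro ⟨a, i⟩; fin_cases a <;> simp }
  have e0 : ∀ i : Fin n, e.symm (0, i) = Sum.inl i := fun i => rfl
  have e1 : ∀ i : Fin n, e.symm (1, i) = Sum.inr i := fun i => rfl
  have hre : (Matrix.reindex e e (Matrix.fromBlocks D D D 0))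
      = Matrix.blockDiagonal (fun i : Fin n => (!![μ i, μ i; μ i, 0] : Matrix (Fin 2) (Fin 2) ℝ)) := by
    ext ⟨a, i⟩ ⟨b, j⟩
    fin_cases a <;> fin_cases b <;>
      · by_cases hij : i = j
        · subst hij
          simp [Matrix.reindex_apply, Matrix.submatrix_apply, e0, e1,
            Matrix.blockDiagonal_apply, hD, Matrix.diagonal_apply]
        · simp [Matrix.reindex_apply, Matrix.submatrix_apply, e0, e1,
            Matrix.blockDiagonal_apply, hD, Matrix.diagonal_apply, hij]
  have hcB2 : B.charpoly = ∏ i, (X - C (φ * μ i)) * (X - C (ψ * μ i)) := by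
    rw [hcB1, ← Matrix.charpoly_reindex e, hre, aux_charpoly_blockDiagonal]
    exact Finset.prod_congr rfl fun i _ => aux_charpoly_two (μ i)
  have hcB3 : B.charpoly = ∏ p, (X - C (ν p)) := aux_charpoly_hermitian B hB
  -- define the candidate eigenvalue family
  set f : Fin n ⊕ Fin n → ℝ := Sum.elim (fun i => φ * μ i) (fun i => ψ * μ i) with hf
  have hprod_eq : ∏ p, (X - C (ν p)) = ∏ p, (X - C (f p)) := by
    rw [← hcB3, hcB2, Fintype.prod_sum_type]
    rw [Finset.prod_mul_distrib]
    simp [hf]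
  -- from equal products of linear factors, equal multisets
  have hmult : (Finset.univ.val.map ν) = (Finset.univ.val.map f) := by
    have h1 : ((Finset.univ.val.map ν).map (fun a : ℝ => X - C a)).prod
        = ((Finset.univ.val.map f).map (fun a : ℝ => X - C a)).prod := by
      rw [Multiset.map_map, Multiset.map_map]
      exact hprod_eq
    have := congrArg Polynomial.roots h1
    rwa [Polynomial.roots_multiset_prod_X_sub_C, Polynomial.roots_multiset_prod_X_sub_C] at this
  have habs : ∑ p, |ν p| = ∑ p, |f p| := by
    calc ∑ p, |ν p| = ((Finset.univ.val.map ν).map abs).sum := by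
          rw [Multiset.map_map]; rfl
      _ = ((Finset.univ.val.map f).map abs).sum := by rw [hmult]
      _ = ∑ p, |f p| := by rw [Multiset.map_map]; rfl
  rw [habs, Fintype.sum_sum_type]
  have hs5 : (0:ℝ) ≤ Real.sqrt 5 := Real.sqrt_nonneg 5
  have hs5' : (1:ℝ) ≤ Real.sqrt 5 := by
    nlinarith [Real.mul_self_sqrt (show (0:ℝ) ≤ 5 by norm_num)]
  have hφ0 : 0 ≤ φ := by rw [hφ]; linarith
  have hψ0 : ψ ≤ 0 := by rw [hψ]; linarith
  have : ∀ i, |f (Sum.inl i)| = φ * |μ i| := by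
    intro i; simp [hf, abs_mul, abs_of_nonneg hφ0]
  have h2 : ∀ i, |f (Sum.inr i)| = -ψ * |μ i| := by
    intro i; simp [hf, abs_mul, abs_of_nonpos hψ0]
  simp only [this, h2]
  rw [← Finset.sum_add_distrib]
  rw [Finset.mul_sum]
  apply Finset.sum_congr rfl
  intro i _
  have : φ + -ψ = Real.sqrt 5 := by rw [hφ, hψ]; ring
  nlinarith [this, abs_nonneg (μ i)]
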